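/- Let f : [0,1] → ℝ be twice continuously differentiable with f(0) = 0, f'(x) ≥ 0 for all x ∈ [0,1], and f''(x) ≤ 0 for all x ∈ [0,1]. For a positive integer r, set A_r(f) = (1/r)·∑_{j=1}^{r-1} f(j/r). Then A_r(f) ≤ A_{r+1}(f) for every r ≥ 1; consequently, if r ≤ s are positive integers, then (1/r)·∑_{j=1}^{r-1} f(j/r) ≤ (1/s)·∑_{j=1}^{s-1} f(j/s). -/

import Mathlib

open Real Finset Set

theorem riemann_sum_monotone (f : ℝ → ℝ)
    (hf : ContDiffOn ℝ 2 f (Set.Icc 0 1))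
    (hf0 : f 0 = 0)
    (hf' : ∀ x ∈ Set.Icc (0 : ℝ) 1, 0 ≤ derivWithin f (Set.Icc 0 1) x)
    (hf'' : ∀ x ∈ Set.Icc (0 : ℝ) 1,
      derivWithin (derivWithin f (Set.Icc 0 1)) (Set.Icc 0 1) x ≤ 0) :
    (∀ r : ℕ, 1 ≤ r →
      (1 / (r : ℝ)) * ∑ j ∈ Finset.Icc 1 (r - 1), f (j / r)
        ≤ (1 / ((r : ℝ) + 1)) * ∑ j ∈ Finset.Icc 1 r, f (j / ((r : ℝ) + 1))) ∧
    (∀ r s : ℕ, 1 ≤ r → r ≤ s →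
      (1 / (r : ℝ)) * ∑ j ∈ Finset.Icc 1 (r - 1), f (j / r)
        ≤ (1 / (s : ℝ)) * ∑ j ∈ Finset.Icc 1 (s - 1), f (j / s)) := by
  have hfc : ContinuousOn f (Set.Icc 0 1) := hf.continuousOn
  have hdf : DifferentiableOn ℝ f (Set.Ioo 0 1) :=
    (hf.mono Set.Ioo_subset_Icc_self).differentiableOn (by norm_num)
  have hcd : ContDiffOn ℝ 1 (deriv f) (Set.Ioo 0 1) :=
    (hf.mono Set.Ioo_subset_Icc_self).deriv_of_isOpen isOpen_Ioo (by norm_num)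
  have hEq : ∀ y ∈ Set.Ioo (0:ℝ) 1, derivWithin f (Set.Icc 0 1) y = deriv f y :=
    fun y hy => derivWithin_of_mem_nhds (Icc_mem_nhds hy.1 hy.2)
  have hd1 : ∀ x ∈ Set.Ioo (0:ℝ) 1, 0 ≤ deriv f x := fun x hx => by
    rw [← hEq x hx]; exact hf' x (Set.Ioo_subset_Icc_self hx)
  have hd2 : ∀ x ∈ Set.Ioo (0:ℝ) 1, deriv (deriv f) x ≤ 0 := by
    intro x hx
    have h1 : derivWithin (derivWithin f (Set.Icc 0 1)) (Set.Icc 0 1) x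
        = deriv (derivWithin f (Set.Icc 0 1)) x :=
      derivWithin_of_mem_nhds (Icc_mem_nhds hx.1 hx.2)
    have h2 : deriv (derivWithin f (Set.Icc 0 1)) x = deriv (deriv f) x := by
      apply Filter.EventuallyEq.deriv_eq
      filter_upwards [Ioo_mem_nhds hx.1 hx.2] with y hy
      exact hEq y hy
    have h3 := hf'' x (Set.Ioo_subset_Icc_self hx)
    rw [h1, h2] at h3; exact h3
  have hmono : MonotoneOn f (Set.Icc 0 1) := by
    apply monotoneOn_of_deriv_nonneg (convex_Icc 0 1) hfc
    · rw [interior_Icc]; exact hdf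
    · rw [interior_Icc]; exact hd1
  have hconc : ConcaveOn ℝ (Set.Icc 0 1) f := by
    apply concaveOn_of_deriv2_nonpos (convex_Icc 0 1) hfc
    · rw [interior_Icc]; exact hdf
    · rw [interior_Icc]; exact hcd.differentiableOn (by norm_num)
    · rw [interior_Icc]
      intro x hx
      simpa [Function.iterate_succ, Function.comp] using hd2 x hx
  have hnn : ∀ x ∈ Set.Icc (0:ℝ) 1, 0 ≤ f x := by
    intro x hx
    have := hmono (Set.mem_Icc.2 ⟨le_rfl, zero_le_one⟩) hx hx.1
    rwa [hf0] at this
  -- the key step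
  have key : ∀ r : ℕ, 1 ≤ r →
      (1 / (r : ℝ)) * ∑ j ∈ Finset.Icc 1 (r - 1), f (j / r)
        ≤ (1 / ((r : ℝ) + 1)) * ∑ j ∈ Finset.Icc 1 r, f (j / ((r : ℝ) + 1)) := by
    intro r hr
    obtain ⟨m, rfl⟩ : ∃ m, r = m + 1 := ⟨r - 1, (Nat.succ_pred_eq_of_pos hr).symm⟩
    set R : ℝ := (m : ℝ) + 1 with hR
    have hRpos : (0:ℝ) < R := by positivity
    have hRpos' : (0:ℝ) < R + 1 := by positivity
    have hcast : ((m + 1 : ℕ) : ℝ) = R := by push_cast [hR]; ring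
    simp only [Nat.add_sub_cancel, hcast]
    -- convert Icc sums to range sums
    rw [show Finset.Icc 1 m = Finset.Ico 1 (m + 1) from (Finset.Ico_add_one_right_eq_Icc 1 m).symm,
        show Finset.Icc 1 (m+1) = Finset.Ico 1 (m + 2) from (Finset.Ico_add_one_right_eq_Icc 1 (m+1)).symm,
        Finset.sum_Ico_eq_sum_range, Finset.sum_Ico_eq_sum_range]
    simp only [Nat.add_sub_cancel, show m + 2 - 1 = m + 1 from rfl]
    set F : ℕ → ℝ := fun k => f ((k : ℝ) / R) with hF
    have hF0 : F 0 = 0 := by simp [hF, hf0]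
    have hmem : ∀ k : ℕ, k ≤ m + 1 → (k : ℝ) / R ∈ Set.Icc (0:ℝ) 1 := by
      intro k hk
      constructor
      · positivity
      · rw [div_le_one hRpos, hR]
        have : (k:ℝ) ≤ (m:ℝ) + 1 := by exact_mod_cast hk
        linarith
    have hFnn : ∀ k : ℕ, k ≤ m + 1 → 0 ≤ F k := fun k hk => hnn _ (hmem k hk)
    have hFle : ∀ k : ℕ, k ≤ m + 1 → F k ≤ F (m + 1) := by
      intro k hk
      apply hmono (hmem k hk) (hmem (m+1) le_rfl)
      exact (div_le_div_iff_of_pos_right hRpos).mpr (by exact_mod_cast hk)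
    -- main concavity inequality at each fine grid point
    have hstep : ∀ i ∈ Finset.range (m + 1),
        ((1 + (i:ℝ)) / (R + 1)) * F i + ((R - i) / (R + 1)) * F (i + 1)
          ≤ f (((1 + i : ℕ) : ℝ) / (R + 1)) := by
      intro i hi
      have him : (i:ℝ) ≤ (m:ℝ) := by exact_mod_cast Nat.lt_succ_iff.1 (Finset.mem_range.1 hi)
      have hx : (i : ℝ) / R ∈ Set.Icc (0:ℝ) 1 := hmem i (le_of_lt (Finset.mem_range.1 hi))
      have hy : ((i + 1 : ℕ) : ℝ) / R ∈ Set.Icc (0:ℝ) 1 := by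
        apply hmem; exact Nat.succ_le_succ (Nat.lt_succ_iff.1 (Finset.mem_range.1 hi))
      have ha : (0:ℝ) ≤ (1 + (i:ℝ)) / (R + 1) := by positivity
      have hb : (0:ℝ) ≤ (R - i) / (R + 1) := by
        apply div_nonneg _ (le_of_lt hRpos')
        rw [hR]; linarith
      have hab : (1 + (i:ℝ)) / (R + 1) + (R - i) / (R + 1) = 1 := by
        field_simp
        ring
      have hcomb : ((1 + (i:ℝ)) / (R + 1)) • ((i : ℝ) / R)
          + ((R - (i:ℝ)) / (R + 1)) • (((i + 1 : ℕ) : ℝ) / R)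
          = ((1 + i : ℕ) : ℝ) / (R + 1) := by
        push_cast [smul_eq_mul]
        field_simp
        ring
      have := hconc.2 hx hy ha hb hab
      rw [hcomb] at this
      simpa [smul_eq_mul, hF] using this
    set T : ℝ := ∑ i ∈ Finset.range m, F (i + 1) with hT
    have hTgoal : ∑ i ∈ Finset.range m, f (((1 + i : ℕ) : ℝ) / R) = T := by
      apply Finset.sum_congr rfl
      intro i _
      simp [hF, Nat.add_comm]
    have e1 : ∑ k ∈ Finset.range (m + 2), ((R + 1 - (k:ℝ)) / (R + 1)) * F k
        = ∑ i ∈ Finset.range (m + 1), ((R - (i:ℝ)) / (R + 1)) * F (i + 1) := by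
      rw [Finset.sum_range_succ' (fun k => ((R + 1 - (k:ℝ)) / (R + 1)) * F k) (m + 1)]
      simp only [Nat.cast_zero, hF0, mul_zero, add_zero]
      apply Finset.sum_congr rfl
      intro i _
      push_cast
      ring_nf
    have e2 : ∑ k ∈ Finset.range (m + 2), ((1 + (k:ℝ)) / (R + 1)) * F k
        = ∑ i ∈ Finset.range (m + 1), ((1 + (i:ℝ)) / (R + 1)) * F i + F (m + 1) := by
      rw [Finset.sum_range_succ]
      congr 1
      have : (1 + ((m + 1 : ℕ) : ℝ)) / (R + 1) = 1 := by
        rw [hR]; push_cast; field_simp; ring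
      rw [this, one_mul]
    have e3 : ∑ k ∈ Finset.range (m + 2), F k = T + F (m + 1) := by
      rw [Finset.sum_range_succ, Finset.sum_range_succ']
      rw [hF0, add_zero, hT]
    have e4 : ∑ k ∈ Finset.range (m + 2), ((1 + (k:ℝ)) / (R + 1)) * F k
        + ∑ k ∈ Finset.range (m + 2), ((R + 1 - (k:ℝ)) / (R + 1)) * F k
        = ((R + 2) / (R + 1)) * (T + F (m + 1)) := by
      rw [← Finset.sum_add_distrib, ← e3, Finset.mul_sum]
      apply Finset.sum_congr rfl
      intro k _
      field_simp
      ring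
    have hsum : ∑ i ∈ Finset.range (m + 1),
        (((1 + (i:ℝ)) / (R + 1)) * F i + ((R - (i:ℝ)) / (R + 1)) * F (i + 1))
        = ((R + 2) * T + F (m + 1)) / (R + 1) := by
      rw [Finset.sum_add_distrib, ← e1]
      have h5 : ∑ i ∈ Finset.range (m + 1), ((1 + (i:ℝ)) / (R + 1)) * F i
          = ∑ k ∈ Finset.range (m + 2), ((1 + (k:ℝ)) / (R + 1)) * F k - F (m + 1) := by
        rw [e2]; ring
      rw [h5]
      rw [show (∑ k ∈ Finset.range (m + 2), ((1 + (k:ℝ)) / (R + 1)) * F k - F (m + 1))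
          + ∑ k ∈ Finset.range (m + 2), ((R + 1 - (k:ℝ)) / (R + 1)) * F k
          = (∑ k ∈ Finset.range (m + 2), ((1 + (k:ℝ)) / (R + 1)) * F k
            + ∑ k ∈ Finset.range (m + 2), ((R + 1 - (k:ℝ)) / (R + 1)) * F k) - F (m + 1)
          from by ring, e4]
      field_simp
      ring
    have hS' : ((R + 2) * T + F (m + 1)) / (R + 1)
        ≤ ∑ i ∈ Finset.range (m + 1), f (((1 + i : ℕ) : ℝ) / (R + 1)) := by
      rw [← hsum]
      exact Finset.sum_le_sum hstep
    have hTm : T ≤ (m : ℝ) * F (m + 1) := by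
      rw [hT]
      calc ∑ i ∈ Finset.range m, F (i + 1)
          ≤ ∑ _i ∈ Finset.range m, F (m + 1) := by
            apply Finset.sum_le_sum
            intro i hi
            exact hFle (i + 1) (Nat.succ_le_succ (le_of_lt (Finset.mem_range.1 hi)))
        _ = (m : ℝ) * F (m + 1) := by
            rw [Finset.sum_const, Finset.card_range, nsmul_eq_mul]
    have hFmnn : 0 ≤ F (m + 1) := hFnn (m + 1) le_rfl
    rw [hTgoal]
    have h1 : (1 / R) * T ≤ ((R + 2) * T + F (m + 1)) / ((R + 1) * (R + 1)) := by
      rw [one_div_mul_eq_div, div_le_div_iff₀ hRpos (by positivity)]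
      have hmR : (m : ℝ) ≤ R := by rw [hR]; linarith
      nlinarith [hFmnn, hTm, hRpos]
    calc (1 / R) * T ≤ ((R + 2) * T + F (m + 1)) / ((R + 1) * (R + 1)) := h1
      _ = (1 / (R + 1)) * (((R + 2) * T + F (m + 1)) / (R + 1)) := by
          rw [div_mul_div_comm, one_mul]
      _ ≤ (1 / (R + 1)) * ∑ i ∈ Finset.range (m + 1), f (((1 + i : ℕ) : ℝ) / (R + 1)) :=
          mul_le_mul_of_nonneg_left hS' (by positivity)
  refine ⟨key, ?_⟩
  intro r s hr hrs
  induction s, hrs using Nat.le_induction with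
  | base => exact le_rfl
  | succ n hn ih =>
    refine ih.trans ?_
    have h := key n (hr.trans hn)
    have hc : ((n + 1 : ℕ) : ℝ) = (n : ℝ) + 1 := by push_cast; ring
    simpa [Nat.add_sub_cancel, hc] using h
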